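/- Brittle binary multiplication correctness: Let β = (1/2)log₂(1/ε) be an integer, ε ≤ 10⁻³, and p₁ = Σ_{i=1}^{β} b*_i 2^{−i} + δ with 3βε < δ < 2^{−β} − 3βε, b*_i ∈ {0,1}. Suppose b_i = b*_i for all i, s_i = p₂2^{−i} ± ε, w_i = s_i b_i ± ε, and p = min{1, Σᵢ wᵢ} ± ε. Then p = p₁p₂ ± 2√ε. -/

import Mathlib

set_option maxHeartbeats 800000 in
open Finset in
/-- Brittle binary multiplication correctness: with `β = (1/2)log₂(1/ε)` integral,
`ε ≤ 10⁻³`, `p₁ = Σᵢ b*ᵢ 2^{-i} + δ` where `3βε < δ < 2^{-β} - 3βε`, and the gadget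
guarantees `bᵢ = b*ᵢ`, `sᵢ = p₂2^{-i} ± ε`, `wᵢ = sᵢbᵢ ± ε`, `p = min{1, Σᵢwᵢ} ± ε`,
the output satisfies `p = p₁p₂ ± 2√ε`. -/
theorem stmt16 (ε p₁ p₂ δ p : ℝ) (β : ℕ) (bstar b s w : ℕ → ℝ)
    (hε : 0 < ε) (hε' : ε ≤ 1/1000)
    (hβ : (β : ℝ) = (1/2) * Real.logb 2 (1/ε))
    (hp₁r : 0 ≤ p₁) (hp₁r' : p₁ ≤ 1) (hp₂r : 0 ≤ p₂) (hp₂r' : p₂ ≤ 1)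
    (hbstar : ∀ i, bstar i = 0 ∨ bstar i = 1)
    (hδl : 3 * (β : ℝ) * ε < δ) (hδu : δ < (1/2 : ℝ) ^ β - 3 * (β : ℝ) * ε)
    (hp₁ : p₁ = (∑ i ∈ Icc 1 β, bstar i * (1/2 : ℝ) ^ i) + δ)
    (hb : ∀ i ∈ Icc 1 β, b i = bstar i)
    (hs : ∀ i ∈ Icc 1 β, |s i - p₂ * (1/2 : ℝ) ^ i| ≤ ε)
    (hw : ∀ i ∈ Icc 1 β, |w i - s i * b i| ≤ ε)
    (hp : |p - min 1 (∑ i ∈ Icc 1 β, w i)| ≤ ε) :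
    |p - p₁ * p₂| ≤ 2 * Real.sqrt ε := by
  -- (1/2)^β = √ε
  have hlog : Real.logb 2 ε = -(2 * (β : ℝ)) := by
    have h0 : Real.logb 2 (1/ε) = - Real.logb 2 ε := by
      rw [one_div, Real.logb_inv]
    rw [h0] at hβ; linarith
  have hε2 : ε = ((1/2 : ℝ) ^ β) ^ 2 := by
    have h1 : ε = (2 : ℝ) ^ (-(2 * (β : ℝ))) := by
      rw [← hlog, Real.rpow_logb (by norm_num) (by norm_num) hε]
    have h2 : ((1/2 : ℝ) ^ β) ^ 2 = (2 : ℝ) ^ (-(2 * (β : ℝ))) := by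
      rw [← pow_mul, one_div, inv_pow, ← Real.rpow_natCast 2 (β * 2),
        ← Real.rpow_neg (by norm_num : (0:ℝ) ≤ 2)]
      congr 1; push_cast; ring
    rw [h1, h2]
  have hsqrt : Real.sqrt ε = (1/2 : ℝ) ^ β := by
    rw [hε2, Real.sqrt_sq (by positivity)]
  set S := ∑ i ∈ Icc 1 β, bstar i * (1/2 : ℝ) ^ i with hS
  set W := ∑ i ∈ Icc 1 β, w i with hW
  have hβε : 0 ≤ (β : ℝ) * ε := by positivity
  have hterm : ∀ i ∈ Icc 1 β, |w i - p₂ * (bstar i * (1/2 : ℝ) ^ i)| ≤ 2 * ε := by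
    intro i hi
    have h1 := hw i hi
    have h2 := hs i hi
    have h3 := hb i hi
    have h4 : |s i * bstar i - p₂ * (1/2 : ℝ) ^ i * bstar i| ≤ ε := by
      have heq : s i * bstar i - p₂ * (1/2 : ℝ) ^ i * bstar i =
          (s i - p₂ * (1/2 : ℝ) ^ i) * bstar i := by ring
      rw [heq, abs_mul]
      rcases hbstar i with h | h
      · rw [h]; simpa using hε.le
      · rw [h, abs_one, mul_one]; exact h2
    calc |w i - p₂ * (bstar i * (1/2 : ℝ) ^ i)|
        ≤ |w i - s i * b i| + |s i * bstar i - p₂ * (1/2 : ℝ) ^ i * bstar i| := by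
          rw [h3, show w i - p₂ * (bstar i * (1/2:ℝ)^i) =
            (w i - s i * bstar i) + (s i * bstar i - p₂ * (1/2:ℝ)^i * bstar i) by ring]
          exact abs_add_le _ _
      _ ≤ 2 * ε := by linarith
  have hA : |W - p₂ * S| ≤ 2 * (β : ℝ) * ε := by
    rw [hW, hS, Finset.mul_sum, ← Finset.sum_sub_distrib]
    calc |∑ i ∈ Icc 1 β, (w i - p₂ * (bstar i * (1/2 : ℝ) ^ i))|
        ≤ ∑ i ∈ Icc 1 β, |w i - p₂ * (bstar i * (1/2 : ℝ) ^ i)| :=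
          Finset.abs_sum_le_sum_abs _ _
      _ ≤ ∑ i ∈ Icc 1 β, (2 * ε) := Finset.sum_le_sum hterm
      _ = (β : ℝ) * (2 * ε) := by rw [Finset.sum_const, Nat.card_Icc]; push_cast; ring
      _ = 2 * (β : ℝ) * ε := by ring
  have hS0 : 0 ≤ S := by
    apply Finset.sum_nonneg
    intro i _
    rcases hbstar i with h | h <;> rw [h] <;> positivity
  have hSp : S = p₁ - δ := by linarith
  have hpS : p₂ * S ≤ S := mul_le_of_le_one_left hS0 hp₂r'
  have hA2 := abs_le.mp hA
  have hW1 : W ≤ 1 := by linarith [hA2.2]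
  rw [min_eq_right hW1] at hp
  have h5 : |p₂ * S - p₁ * p₂| ≤ δ := by
    rw [hSp, abs_le]
    constructor <;> nlinarith [hβε, hδl, hp₂r, hp₂r']
  have hfin : |p - p₁ * p₂| ≤ ε + 2 * (β : ℝ) * ε + δ := by
    have heq : p - p₁ * p₂ = (p - W) + (W - p₂ * S) + (p₂ * S - p₁ * p₂) := by ring
    calc |p - p₁ * p₂| ≤ |p - W| + |W - p₂ * S| + |p₂ * S - p₁ * p₂| := by
          rw [heq]
          exact (abs_add_le _ _).trans (add_le_add_left (abs_add_le _ _) _)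
      _ ≤ ε + 2 * (β : ℝ) * ε + δ := by linarith
  have hεle : ε ≤ Real.sqrt ε := by nlinarith [Real.sq_sqrt hε.le, Real.sqrt_nonneg ε]
  linarith [hfin, hδu, hεle, hβε, hsqrt.le, hsqrt.ge]
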